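/- Let S be a finite set with |S| = n and let d ≤ n be a nonnegative integer. If a family F of subsets of S shatters no (d+1)-element subset of S (i.e. F has VC-dimension at most d), then |F| ≤ binom(n,0) + binom(n,1) + ... + binom(n,d). -/
import Mathlib

/-- **Sauer–Shelah / Vapnik–Chervonenkis lemma.** If a family `F` of subsets of a finite
set `S` with `|S| = n` shatters no `(d+1)`-element subset of `S`, then
`F ≤ binom(n,0) + ⋯ + binom(n,d)`. -/
theorem sauer_shelah_bound {α : Type*} [Fintype α] [DecidableEq α] (n d : ℕ)
    (hdn : d ≤ n) (hcard : Fintype.card α = n) (F : Finset (Finset α))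
    (hF : ∀ A : Finset α, A.card = d + 1 → ¬ F.Shatters A) :
    F.card ≤ ∑ k ∈ Finset.range (d + 1), n.choose k := by
  have h1 : F.card ≤ F.shatterer.card := F.card_le_card_shatterer
  have h2 : F.shatterer ⊆ (Finset.range (d + 1)).biUnion
      (fun k => Finset.powersetCard k Finset.univ) := by
    intro A hA
    rw [Finset.mem_shatterer] at hA
    have hAle : A.card ≤ d := by
      by_contra h
      push_neg at h
      obtain ⟨B, hBA, hB⟩ := Finset.exists_subset_card_eq (by omega : d + 1 ≤ A.card)
      exact hF B hB (hA.mono_right hBA)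
    simp only [Finset.mem_biUnion, Finset.mem_range, Finset.mem_powersetCard]
    exact ⟨A.card, by omega, Finset.subset_univ A, rfl⟩
  calc F.card ≤ F.shatterer.card := h1
    _ ≤ ((Finset.range (d + 1)).biUnion (fun k => Finset.powersetCard k Finset.univ)).card :=
        Finset.card_le_card h2
    _ ≤ ∑ k ∈ Finset.range (d + 1), (Finset.powersetCard k (Finset.univ : Finset α)).card :=
        Finset.card_biUnion_le
    _ = ∑ k ∈ Finset.range (d + 1), n.choose k := by
        simp [Finset.card_powersetCard, hcard]
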